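/- Let ζ ∈ [π/2, π) and consider the Yang–Yang action S(μ₁,…,μ_N) = Σ_a P(μ_a)/(2π) − (1/(4πL)) Σ_{a,b} Θ(μ_a−μ_b) − Σ_a μ_a n_a/L where P' = p, Θ' = θ with p, θ the bare momentum and phase for Δ = cos ζ. Then the Hessian of S is positive definite at every point of ℝ^N; in particular S is strictly convex and admits at most one critical point. -/

import Mathlib

open Real

private lemma yy_combine {N : ℕ} (h A : Fin N → ℝ) (G : Fin N → Fin N → ℝ) (c : ℝ) :
    ∑ j, ∑ k, h j * h k * ((if j = k then A k - c * ∑ b, G k b else 0) + c * G j k)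
      = ∑ j, h j ^ 2 * A j - c * ∑ j, ∑ k, h j * (h j - h k) * G j k := by
  simp only [mul_add, Finset.sum_add_distrib, mul_ite, mul_zero, Finset.sum_ite_eq,
    Finset.mem_univ, if_true]
  rw [Finset.mul_sum, ← Finset.sum_sub_distrib, ← Finset.sum_add_distrib]
  refine Finset.sum_congr rfl fun j _ => ?_
  have e2 : ∑ k, h j * h k * (c * G j k) = c * h j * ∑ k, h k * G j k := by
    rw [Finset.mul_sum]; exact Finset.sum_congr rfl fun k _ => by ring
  have e3 : ∑ k, h j * (h j - h k) * G j k
      = h j * h j * (∑ k, G j k) - h j * ∑ k, h k * G j k := by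
    rw [Finset.mul_sum, Finset.mul_sum, ← Finset.sum_sub_distrib]
    exact Finset.sum_congr rfl fun k _ => by ring
  rw [e2, e3]; ring

private lemma yy_sym {N : ℕ} (h : Fin N → ℝ) (G : Fin N → Fin N → ℝ)
    (hG : ∀ j k, G j k = G k j) :
    ∑ j, ∑ k, h j * (h j - h k) * G j k
      = (1 / 2) * ∑ j, ∑ k, (h j - h k) ^ 2 * G j k := by
  have h1 : ∑ j, ∑ k, h j * (h j - h k) * G j k
      = ∑ j, ∑ k, h k * (h k - h j) * G j k := by
    rw [Finset.sum_comm]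
    exact Finset.sum_congr rfl fun j _ => Finset.sum_congr rfl fun k _ => by rw [hG k j]
  have h3 : ∑ j, ∑ k, (h j - h k) ^ 2 * G j k
      = ∑ j, ∑ k, h j * (h j - h k) * G j k + ∑ j, ∑ k, h k * (h k - h j) * G j k := by
    rw [← Finset.sum_add_distrib]
    refine Finset.sum_congr rfl fun j _ => ?_
    rw [← Finset.sum_add_distrib]
    exact Finset.sum_congr rfl fun k _ => by ring
  rw [h3, ← h1]; ring

private lemma yy_core (ζ : ℝ) (hζ1 : π / 2 ≤ ζ) (hζ2 : ζ < π) {N : ℕ}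
    (x h : Fin N → ℝ) (hh : h ≠ 0) (c : ℝ) (hc : 0 ≤ c)
    (G : Fin N → Fin N → ℝ) (hG : ∀ j k, G j k ≤ 0) :
    0 < (∑ j, h j ^ 2 * (Real.sin ζ / (Real.sinh (x j) ^ 2 + Real.sin (ζ / 2) ^ 2) / (2 * π)))
        - c * ∑ j, ∑ k, (h j - h k) ^ 2 * G j k := by
  have hπ := Real.pi_pos
  have hζpos : 0 < ζ := lt_of_lt_of_le (by linarith) hζ1
  have hsin2 : 0 < Real.sin (ζ / 2) :=
    Real.sin_pos_of_pos_of_lt_pi (by linarith) (by linarith)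
  have hsin : 0 < Real.sin ζ := Real.sin_pos_of_pos_of_lt_pi hζpos hζ2
  obtain ⟨a, ha⟩ := Function.ne_iff.mp hh
  have hterm : ∀ j : Fin N,
      0 < Real.sin ζ / (Real.sinh (x j) ^ 2 + Real.sin (ζ / 2) ^ 2) / (2 * π) := fun j =>
    div_pos (div_pos hsin (by positivity)) (by positivity)
  have t1 : 0 < ∑ j, h j ^ 2 * (Real.sin ζ / (Real.sinh (x j) ^ 2 + Real.sin (ζ / 2) ^ 2) / (2 * π)) := by
    refine Finset.sum_pos' (fun j _ => by positivity) ⟨a, Finset.mem_univ a, ?_⟩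
    have : 0 < h a ^ 2 := lt_of_le_of_ne (sq_nonneg _) (Ne.symm (pow_ne_zero 2 ha))
    exact mul_pos this (hterm a)
  have t2 : ∑ j, ∑ k, (h j - h k) ^ 2 * G j k ≤ 0 :=
    Finset.sum_nonpos fun j _ => Finset.sum_nonpos fun k _ =>
      mul_nonpos_of_nonneg_of_nonpos (sq_nonneg _) (hG j k)
  nlinarith [mul_nonneg hc (neg_nonneg.mpr t2)]

theorem yang_yang_hessian_posdef (ζ : ℝ) (hζ1 : π / 2 ≤ ζ) (hζ2 : ζ < π)
    (N L : ℕ) (hN : 0 < N) (hL : 0 < L)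
    (𝔭 ϑ : ℝ → ℝ)
    (h𝔭 : ∀ x, HasDerivAt 𝔭 (Real.sin ζ / (Real.sinh x ^ 2 + Real.sin (ζ / 2) ^ 2)) x)
    (hϑ : ∀ x, HasDerivAt ϑ (Real.sin (2 * ζ) / (Real.sinh x ^ 2 + Real.sin ζ ^ 2)) x)
    (hϑodd : ∀ x, ϑ (-x) = -ϑ x)
    (n : Fin N → ℝ) :
    -- positive definiteness of the Hessian of the Yang–Yang action at any point μ
    (∀ μ : Fin N → ℝ, ∀ h : Fin N → ℝ, h ≠ 0 →
      0 < ∑ j, ∑ k, h j * h k *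
        ((if j = k then
            Real.sin ζ / (Real.sinh (μ k) ^ 2 + Real.sin (ζ / 2) ^ 2) / (2 * π)
              - (1 / (L : ℝ)) * ∑ b,
                  Real.sin (2 * ζ) / (2 * π * (Real.sinh (μ k - μ b) ^ 2 + Real.sin ζ ^ 2))
          else 0)
          + Real.sin (2 * ζ) / (2 * π * (Real.sinh (μ j - μ k) ^ 2 + Real.sin ζ ^ 2)) / L)) ∧
    -- the critical point equations (logarithmic Bethe equations) have at most one solution
    (∀ μ ν : Fin N → ℝ,
      (∀ a, 𝔭 (μ a) / (2 * π) - (1 / (2 * π * L)) * ∑ b, ϑ (μ a - μ b) - n a / L = 0) →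
      (∀ a, 𝔭 (ν a) / (2 * π) - (1 / (2 * π * L)) * ∑ b, ϑ (ν a - ν b) - n a / L = 0) →
      μ = ν) := by
  have hπ := Real.pi_pos
  have hζpos : 0 < ζ := lt_of_lt_of_le (by linarith) hζ1
  have hsin : 0 < Real.sin ζ := Real.sin_pos_of_pos_of_lt_pi hζpos hζ2
  -- sin (2ζ) ≤ 0 on [π, 2π)
  have hsin2ζ : Real.sin (2 * ζ) ≤ 0 := by
    have h' := Real.sin_sub_pi (2 * ζ)
    have h'' : 0 ≤ Real.sin (2 * ζ - π) :=
      Real.sin_nonneg_of_nonneg_of_le_pi (by linarith) (by linarith)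
    linarith
  have hLpos : (0:ℝ) < (L:ℝ) := by exact_mod_cast hL
  -- the kernel function
  set g : ℝ → ℝ := fun y => Real.sin (2 * ζ) / (2 * π * (Real.sinh y ^ 2 + Real.sin ζ ^ 2)) with hg
  have hgnonpos : ∀ y, g y ≤ 0 := fun y => by
    have hden : 0 < 2 * π * (Real.sinh y ^ 2 + Real.sin ζ ^ 2) := by positivity
    exact div_nonpos_of_nonpos_of_nonneg hsin2ζ hden.le
  have hgeven : ∀ y, g (-y) = g y := fun y => by
    simp [hg, Real.sinh_neg, neg_sq]
  constructor
  · intro μ h hh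
    have hcomb := yy_combine h
      (fun k => Real.sin ζ / (Real.sinh (μ k) ^ 2 + Real.sin (ζ / 2) ^ 2) / (2 * π))
      (fun j k => g (μ j - μ k)) (1 / (L : ℝ))
    have hrw : ∑ j, ∑ k, h j * h k *
        ((if j = k then
            Real.sin ζ / (Real.sinh (μ k) ^ 2 + Real.sin (ζ / 2) ^ 2) / (2 * π)
              - (1 / (L : ℝ)) * ∑ b,
                  Real.sin (2 * ζ) / (2 * π * (Real.sinh (μ k - μ b) ^ 2 + Real.sin ζ ^ 2))
          else 0)
          + Real.sin (2 * ζ) / (2 * π * (Real.sinh (μ j - μ k) ^ 2 + Real.sin ζ ^ 2)) / L)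
        = ∑ j, ∑ k, h j * h k *
          ((if j = k then
              Real.sin ζ / (Real.sinh (μ k) ^ 2 + Real.sin (ζ / 2) ^ 2) / (2 * π)
                - (1 / (L : ℝ)) * ∑ b, g (μ k - μ b)
            else 0) + (1 / (L : ℝ)) * g (μ j - μ k)) := by
      refine Finset.sum_congr rfl fun j _ => Finset.sum_congr rfl fun k _ => ?_
      congr 1
      simp only [hg]
      ring
    rw [hrw, hcomb, yy_sym h _ (fun j k => by
      have : μ k - μ j = -(μ j - μ k) := by ring
      rw [this, hgeven])]
    rw [← mul_assoc]
    exact yy_core ζ hζ1 hζ2 μ h hh _ (by positivity) _ (fun j k => hgnonpos _)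
  · intro μ ν hμ hν
    by_contra hne
    set h : Fin N → ℝ := fun a => ν a - μ a with hhdef
    have hh : h ≠ 0 := by
      intro h0
      apply hne
      funext a
      have := congrFun h0 a
      simp [hhdef] at this
      linarith
    set x : ℝ → Fin N → ℝ := fun t a => μ a + t * (ν a - μ a) with hxdef
    set φ : ℝ → ℝ := fun t => ∑ a, h a *
      (𝔭 (x t a) / (2 * π) - (1 / (2 * π * L)) * ∑ b, ϑ (x t a - x t b) - n a / L) with hφ
    set q : ℝ → ℝ := fun t => ∑ a, h a *
      ((Real.sin ζ / (Real.sinh (x t a) ^ 2 + Real.sin (ζ / 2) ^ 2)) * h a / (2 * π)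
        - (1 / (2 * π * L)) * ∑ b,
            (Real.sin (2 * ζ) / (Real.sinh (x t a - x t b) ^ 2 + Real.sin ζ ^ 2)) * (h a - h b))
      with hq
    have haff : ∀ (t : ℝ) (c : Fin N), HasDerivAt (fun t => μ c + t * (ν c - μ c)) (h c) t :=
      fun t c => by
        simpa [hhdef] using ((hasDerivAt_id t).mul_const (ν c - μ c)).const_add (μ c)
    have hderiv : ∀ t, HasDerivAt φ (q t) t := by
      intro t
      apply HasDerivAt.fun_sum
      intro a _
      have h1 : HasDerivAt (fun s => 𝔭 (x s a))
          (Real.sin ζ / (Real.sinh (x t a) ^ 2 + Real.sin (ζ / 2) ^ 2) * h a) t :=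
        (h𝔭 (x t a)).comp t (haff t a)
      have h2 : ∀ b : Fin N, HasDerivAt (fun s => ϑ (x s a - x s b))
          (Real.sin (2 * ζ) / (Real.sinh (x t a - x t b) ^ 2 + Real.sin ζ ^ 2) * (h a - h b)) t :=
        fun b => (hϑ (x t a - x t b)).comp t ((haff t a).sub (haff t b))
      have hsum : HasDerivAt (fun s => ∑ b, ϑ (x s a - x s b))
          (∑ b, Real.sin (2 * ζ) / (Real.sinh (x t a - x t b) ^ 2 + Real.sin ζ ^ 2) * (h a - h b))
          t := HasDerivAt.fun_sum (fun b _ => h2 b)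
      have h3 := ((h1.div_const (2 * π)).sub
        (hsum.const_mul (1 / (2 * π * L)))).sub_const (n a / L)
      exact h3.const_mul (h a)
    have hqpos : ∀ t, 0 < q t := by
      intro t
      have G : Fin N → Fin N → ℝ := fun a b =>
        Real.sin (2 * ζ) / (Real.sinh (x t a - x t b) ^ 2 + Real.sin ζ ^ 2)
      have hGsym : ∀ a b : Fin N,
          (fun a b => Real.sin (2 * ζ) / (Real.sinh (x t a - x t b) ^ 2 + Real.sin ζ ^ 2)) a b
          = (fun a b => Real.sin (2 * ζ) / (Real.sinh (x t a - x t b) ^ 2 + Real.sin ζ ^ 2)) b a := by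
        intro a b
        simp only
        rw [show x t b - x t a = -(x t a - x t b) by ring, Real.sinh_neg, neg_sq]
      have e1 : q t = (∑ a, h a ^ 2 *
            (Real.sin ζ / (Real.sinh (x t a) ^ 2 + Real.sin (ζ / 2) ^ 2) / (2 * π)))
          - (1 / (2 * π * L)) * ∑ a, ∑ b, h a * (h a - h b) *
              (Real.sin (2 * ζ) / (Real.sinh (x t a - x t b) ^ 2 + Real.sin ζ ^ 2)) := by
        rw [hq, Finset.mul_sum, ← Finset.sum_sub_distrib]
        refine Finset.sum_congr rfl fun a _ => ?_
        have e2 : ∑ b, h a * (h a - h b) *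
            (Real.sin (2 * ζ) / (Real.sinh (x t a - x t b) ^ 2 + Real.sin ζ ^ 2))
            = h a * ∑ b, (Real.sin (2 * ζ) / (Real.sinh (x t a - x t b) ^ 2 + Real.sin ζ ^ 2))
                * (h a - h b) := by
          rw [Finset.mul_sum]; exact Finset.sum_congr rfl fun b _ => by ring
        rw [e2]; ring
      rw [e1, yy_sym h _ hGsym, ← mul_assoc]
      have hsinnonpos : ∀ a b : Fin N,
          Real.sin (2 * ζ) / (Real.sinh (x t a - x t b) ^ 2 + Real.sin ζ ^ 2) ≤ 0 := by
        intro a b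
        apply div_nonpos_of_nonpos_of_nonneg hsin2ζ
        positivity
      exact yy_core ζ hζ1 hζ2 (x t) h hh _ (by positivity) _ hsinnonpos
    have hmono : StrictMono φ :=
      strictMono_of_deriv_pos fun t => by rw [(hderiv t).deriv]; exact hqpos t
    have h0 : φ 0 = 0 := by
      rw [hφ]
      refine Finset.sum_eq_zero fun a _ => ?_
      have hx0 : x 0 = μ := by funext c; simp [hxdef]
      rw [hx0, hμ a, mul_zero]
    have h1 : φ 1 = 0 := by
      rw [hφ]
      refine Finset.sum_eq_zero fun a _ => ?_
      have hx1 : x 1 = ν := by funext c; simp [hxdef]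
      rw [hx1, hν a, mul_zero]
    have := hmono (show (0:ℝ) < 1 by norm_num)
    rw [h0, h1] at this
    exact lt_irrefl 0 this
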